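/- Let C be a linear code of length n over a finite commutative Frobenius ring R, and let χ : (R, +) → ℂ^× be a generating character of R. Let S = (s_{ij}) be the (t+1)×(t+1) complex matrix with rows and columns indexed by {0, 1, …, t}, where s_{ij} = Σ_{r ∈ R, rR = a_jR} χ(r a_i). Then swe_{C⊥}(x) = (1/|C|) · swe_C(Sx), as an identity of polynomials in x_0, …, x_t. -/

import Mathlib

noncomputable section
open scoped BigOperators

/-- The dual of a linear code `C ⊆ Rⁿ` with respect to the standard inner
product `u·v = ∑ ℓ, u ℓ * v ℓ`. -/
def dualCode {R : Type*} [CommRing R] {n : ℕ} (C : Submodule R (Fin n → R)) :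
    Submodule R (Fin n → R) where
  carrier := {v | ∀ u ∈ C, ∑ ℓ, u ℓ * v ℓ = 0}
  add_mem' := by
    intro v w hv hw u hu
    simp only [Set.mem_setOf_eq] at *
    have h1 := hv u hu
    have h2 := hw u hu
    simp only [Pi.add_apply, mul_add, Finset.sum_add_distrib, h1, h2, add_zero]
  zero_mem' := by
    intro u hu
    simp
  smul_mem' := by
    intro c v hv u hu
    simp only [Set.mem_setOf_eq] at *
    have h := hv u hu
    have : ∑ ℓ, u ℓ * (c • v) ℓ = c * ∑ ℓ, u ℓ * v ℓ := by
      rw [Finset.mul_sum]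
      exact Finset.sum_congr rfl fun ℓ _ => by
        simp only [Pi.smul_apply, smul_eq_mul]; ring
    rw [this, h, mul_zero]

/-- A finite commutative ring is Frobenius iff `|C|·|C⊥| = |R|ⁿ` for every
linear code `C` of every length `n` over `R`. -/
def IsFrobeniusRing (R : Type*) [CommRing R] [Fintype R] : Prop :=
  ∀ (n : ℕ) (C : Submodule R (Fin n → R)),
    Nat.card C * Nat.card (dualCode C) = Fintype.card R ^ n

open MvPolynomial Classical

/-- The symmetrized weight composition `swc_i(c) = |{ℓ : c_ℓ R = a_i R}|`. -/
def swc {R : Type*} [CommRing R] {t n : ℕ} (a : Fin (t + 1) → R)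
    (c : Fin n → R) (i : Fin (t + 1)) : ℕ :=
  Nat.card {ℓ : Fin n // Ideal.span {c ℓ} = Ideal.span {a i}}

/-- The symmetrized weight enumerator
`swe_C(x₀, …, x_t) = ∑_{c ∈ C} ∏ᵢ xᵢ^(swcᵢ(c))`, with complex coefficients. -/
def swe {R : Type*} [CommRing R] [Fintype R] {t n : ℕ} (a : Fin (t + 1) → R)
    (C : Submodule R (Fin n → R)) : MvPolynomial (Fin (t + 1)) ℂ :=
  haveI : Fintype C := Fintype.ofFinite C
  ∑ c : C, ∏ i, X i ^ swc a (c : Fin n → R) i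

-- ==================== auxiliary lemmas ====================
section Aux

lemma exists_pow_idem {M : Type*} [CommMonoid M] [Finite M] (x : M) :
    ∃ k : ℕ, 0 < k ∧ x ^ k * x ^ k = x ^ k := by
  obtain ⟨i, j, hne, hij⟩ := Finite.exists_ne_map_eq_of_infinite (fun n : ℕ => x ^ n)
  wlog hlt : i < j generalizing i j
  · exact this j i hne.symm hij.symm (by omega)
  set p := j - i with hp
  have hppos : 0 < p := by omega
  have hstep : ∀ m, i ≤ m → x ^ (m + p) = x ^ m := by
    intro m hm
    have h1 : x ^ m = x ^ i * x ^ (m - i) := by rw [← pow_add]; congr 1; omega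
    have h2 : x ^ (m + p) = x ^ j * x ^ (m - i) := by rw [← pow_add]; congr 1; omega
    rw [h1, h2, hij]
  have key : ∀ d m, i ≤ m → x ^ (m + d * p) = x ^ m := by
    intro d
    induction d with
    | zero => simp
    | succ d ih =>
      intro m hm
      have : m + (d + 1) * p = (m + d * p) + p := by ring
      rw [this, hstep _ (by omega), ih m hm]
  refine ⟨(i + 1) * p, by positivity, ?_⟩
  rw [← pow_add]
  exact key (i + 1) ((i + 1) * p) (by nlinarith)

private lemma mul_pow_eq_self' {R : Type*} [CommRing R] {a x : R} (hax : a * x = a) :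
    ∀ k : ℕ, a * x ^ k = a := by
  intro k
  induction k with
  | zero => simp
  | succ m ih => rw [pow_succ, ← mul_assoc, ih, hax]

lemma exists_unit_of_span_eq {R : Type*} [CommRing R] [Finite R] {a c : R}
    (h : Ideal.span {c} = Ideal.span {a}) : ∃ u : Rˣ, c = ↑u * a := by
  have hca : a ∣ c := Ideal.mem_span_singleton.mp (h ▸ Ideal.mem_span_singleton_self c)
  have hac : c ∣ a := Ideal.mem_span_singleton.mp (h ▸ Ideal.mem_span_singleton_self a)
  obtain ⟨s, hs⟩ := hca
  obtain ⟨s', hs'⟩ := hac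
  set x := s * s' with hx
  have hax : a * x = a := by rw [hx, ← mul_assoc, ← hs, ← hs']
  obtain ⟨k, hk, hidem⟩ := exists_pow_idem x
  set e := x ^ k with he
  have hae : a * e = a := mul_pow_eq_self' hax k
  have hpow : ∀ m : ℕ, 0 < m → (x * e + (1 - e)) ^ m = x ^ m * e + (1 - e) := by
    intro m hm
    induction m with
    | zero => omega
    | succ d ih =>
      rcases Nat.eq_zero_or_pos d with hd | hd
      · subst hd; ring_nf
      · rw [pow_succ, ih hd]
        linear_combination (x ^ (d + 1) - x ^ d - x + 1) * hidem
  have hunit : (x * e + (1 - e)) ^ k = 1 := by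
    rw [hpow k hk, ← he, hidem]; ring
  have hmul : (s * e + (1 - e)) * (s' * e + (1 - e)) = x * e + (1 - e) := by
    linear_combination (s * s' - s - s' + 1) * hidem - e * hx
  have hu : IsUnit (s * e + (1 - e)) := by
    apply IsUnit.of_mul_eq_one ((s' * e + (1 - e)) * (x * e + (1 - e)) ^ (k - 1))
    rw [← mul_assoc, hmul, ← pow_succ']
    have : k - 1 + 1 = k := by omega
    rw [this, hunit]
  obtain ⟨u, hu⟩ := hu
  refine ⟨u, ?_⟩
  rw [hu]; symm
  have hea : e * a = a := by rw [mul_comm]; exact hae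
  calc (s * e + (1 - e)) * a = s * (e * a) + (a - e * a) := by ring
  _ = s * a + (a - a) := by rw [hea]
  _ = c := by rw [hs]; ring

lemma sum_char_congr {R : Type*} [CommRing R] [Fintype R] (χ : AddChar R ℂ) {a c : R}
    (h : Ideal.span {c} = Ideal.span {a}) (b : R) :
    (∑ r : R, if Ideal.span {r} = Ideal.span {b} then χ (r * c) else 0)
      = ∑ r : R, if Ideal.span {r} = Ideal.span {b} then χ (r * a) else 0 := by
  obtain ⟨u, rfl⟩ := exists_unit_of_span_eq h
  refine Fintype.sum_bijective (fun r => (u : R) * r) ?_ _ _ ?_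
  · exact Function.bijective_iff_has_inverse.mpr
      ⟨fun r => ((u⁻¹ : Rˣ) : R) * r, fun r => by simp, fun r => by simp⟩
  · intro r
    rw [Ideal.span_singleton_mul_left_unit u.isUnit r]
    by_cases hr : Ideal.span {r} = Ideal.span {b}
    · simp only [hr, if_true]
      congr 1
      ring
    · simp [hr]

/-- the linear functional `u ↦ ∑ ℓ, u ℓ * v ℓ`. -/
def dotL {R : Type*} [CommRing R] {n : ℕ} (v : Fin n → R) : (Fin n → R) →ₗ[R] R where
  toFun u := ∑ ℓ, u ℓ * v ℓ
  map_add' u w := by simp [add_mul, Finset.sum_add_distrib]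
  map_smul' r u := by simp [Finset.mul_sum, mul_assoc]

lemma AddChar.map_finset_sum {A M ι : Type*} [AddCommMonoid A] [CommMonoid M]
    (χ : AddChar A M) (s : Finset ι) (g : ι → A) :
    χ (∑ i ∈ s, g i) = ∏ i ∈ s, χ (g i) := by
  classical
  induction s using Finset.cons_induction with
  | empty => simp
  | cons a s ha ih => rw [Finset.sum_cons, Finset.prod_cons, AddChar.map_add_eq_mul, ih]

lemma mem_dualCode' {R : Type*} [CommRing R] {n : ℕ} (C : Submodule R (Fin n → R))
    (v : Fin n → R) :
    v ∈ dualCode C ↔ ∀ u ∈ C, ∑ ℓ, u ℓ * v ℓ = 0 := Iff.rfl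

lemma orth_sum {R : Type*} [CommRing R] [Fintype R] (χ : AddChar R ℂ)
    (hχ : ∀ I : Ideal R, (∀ x ∈ I, χ x = 1) → I = ⊥)
    {n : ℕ} (C : Submodule R (Fin n → R)) [Fintype C] (v : Fin n → R) :
    (∑ u : C, χ (∑ ℓ, (u : Fin n → R) ℓ * v ℓ))
      = if v ∈ dualCode C then (Fintype.card C : ℂ) else 0 := by
  set ψ : AddChar C ℂ :=
    χ.compAddMonoidHom (((dotL v).comp C.subtype).toAddMonoidHom) with hψ
  have hsum : (∑ u : C, χ (∑ ℓ, (u : Fin n → R) ℓ * v ℓ)) = ∑ u : C, ψ u := rfl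
  rw [hsum, AddChar.sum_eq_ite ψ]
  have hiff : ψ = 0 ↔ v ∈ dualCode C := by
    rw [AddChar.eq_zero_iff, mem_dualCode']
    constructor
    · intro h1 u hu
      have hI : Submodule.map (dotL v) C = ⊥ := by
        apply hχ
        intro x hx
        obtain ⟨w, hw, rfl⟩ := hx
        exact h1 ⟨w, hw⟩
      have : dotL v u ∈ Submodule.map (dotL v) C := ⟨u, hu, rfl⟩
      rw [hI] at this
      simpa [dotL] using this
    · intro h1 x
      have hx : (∑ ℓ, (x : Fin n → R) ℓ * v ℓ) = 0 := h1 x x.2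
      show χ (∑ ℓ, (x : Fin n → R) ℓ * v ℓ) = 1
      rw [hx, AddChar.map_zero_eq_one]
  simp only [hiff]

end Aux

/-- Wood's MacWilliams identity for the symmetrized weight
enumerator, `swe_{C⊥}(x) = (1/|C|) · swe_C(Sx)`, where
`s_{ij} = ∑_{r R = a_j R} χ(r a_i)` for a generating character `χ` of `R`. -/
theorem stmt4 {R : Type*} [CommRing R] [Fintype R] (hR : IsFrobeniusRing R)
    {t : ℕ} (a : Fin (t + 1) → R)
    (hrep : ∀ r : R, ∃ i, Ideal.span {r} = Ideal.span {a i})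
    (hinj : ∀ i j, Ideal.span {a i} = Ideal.span {a j} → i = j)
    (χ : AddChar R ℂ)
    (hχ : ∀ I : Ideal R, (∀ x ∈ I, χ x = 1) → I = ⊥)
    {n : ℕ} (C : Submodule R (Fin n → R))
    (S : Matrix (Fin (t + 1)) (Fin (t + 1)) ℂ)
    (hS : ∀ i j, S i j = ∑ r : R,
      if Ideal.span {r} = Ideal.span {a j} then χ (r * a i) else 0) :
    swe a (dualCode C) =
      MvPolynomial.C ((Nat.card C : ℂ)⁻¹) *
        (MvPolynomial.bind₁ (fun i : Fin (t + 1) =>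
          ∑ j : Fin (t + 1), MvPolynomial.C (S i j) * X j)) (swe a C) := by
  classical
  choose ι hι using hrep
  have hι' : ∀ (r : R) (i : Fin (t + 1)),
      Ideal.span {r} = Ideal.span {a i} ↔ ι r = i := by
    intro r i
    constructor
    · intro h; exact hinj _ _ ((hι r).symm.trans h)
    · rintro rfl; exact hι r
  haveI instC : Fintype C := Fintype.ofFinite C
  haveI instD : Fintype (dualCode C) := Fintype.ofFinite _
  have hCuniv : (@Finset.univ C (Fintype.ofFinite C)) = (Finset.univ : Finset C) := by
    congr 1
    exact Subsingleton.elim _ _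
  have hDuniv : (@Finset.univ (dualCode C) (Fintype.ofFinite _)) = (Finset.univ : Finset (dualCode C)) := by
    congr 1
    exact Subsingleton.elim _ _
  set P : Fin (t + 1) → MvPolynomial (Fin (t + 1)) ℂ :=
    fun i => ∑ j, MvPolynomial.C (S i j) * X j with hPdef
  set f : (Fin n → R) → MvPolynomial (Fin (t + 1)) ℂ :=
    fun v => ∏ ℓ, X (ι (v ℓ)) with hfdef
  -- Step A : the monomial of a word
  have hA : ∀ c : Fin n → R, (∏ i, (X i : MvPolynomial (Fin (t+1)) ℂ) ^ swc a c i) = f c := by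
    intro c
    have hswc : ∀ i, swc a c i
        = (Finset.univ.filter (fun ℓ => ι (c ℓ) = i)).card := by
      intro i
      rw [swc, Nat.card_eq_fintype_card, Fintype.card_subtype]
      congr 1
      ext ℓ
      simp [hι']
    show _ = ∏ ℓ, (X (ι (c ℓ)) : MvPolynomial (Fin (t+1)) ℂ)
    rw [← Finset.prod_fiberwise Finset.univ (fun ℓ => ι (c ℓ))
      (fun ℓ => (X (ι (c ℓ)) : MvPolynomial (Fin (t+1)) ℂ))]
    refine Finset.prod_congr rfl fun i _ => ?_
    rw [hswc i, ← Finset.prod_const]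
    exact Finset.prod_congr rfl fun ℓ hℓ => by rw [(Finset.mem_filter.mp hℓ).2]
  -- Step B : the image of a variable under the substitution
  have hB : ∀ r : R, P (ι r)
      = ∑ s : R, MvPolynomial.C (χ (s * r)) * X (ι s) := by
    intro r
    have h1 : ∀ j, S (ι r) j
        = ∑ s ∈ Finset.univ.filter (fun s => ι s = j), χ (s * r) := by
      intro j
      rw [hS, sum_char_congr χ (hι r).symm (a j), Finset.sum_filter]
      exact Finset.sum_congr rfl fun s _ => by simp only [hι']
    calc P (ι r) = ∑ j, MvPolynomial.C (S (ι r) j) * X j := rfl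
    _ = ∑ j, ∑ s ∈ Finset.univ.filter (fun s => ι s = j),
          MvPolynomial.C (χ (s * r)) * X j := by
        refine Finset.sum_congr rfl fun j _ => ?_
        rw [h1 j, map_sum, Finset.sum_mul]
    _ = ∑ s : R, MvPolynomial.C (χ (s * r)) * X (ι s) := by
        rw [← Finset.sum_fiberwise Finset.univ (fun s : R => ι s)
          (fun s => MvPolynomial.C (χ (s * r)) * X (ι s))]
        refine Finset.sum_congr rfl fun j _ => Finset.sum_congr rfl fun s hs => ?_
        rw [(Finset.mem_filter.mp hs).2]
  -- the main computation
  have key : (MvPolynomial.bind₁ P) (swe a C)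
      = MvPolynomial.C ((Fintype.card C : ℂ)) * swe a (dualCode C) := by
    have h1 : swe a C = ∑ c : C, f (c : Fin n → R) := by
      rw [swe, hCuniv]
      exact Finset.sum_congr rfl fun c _ => hA c
    have h2 : ∀ c : C, (MvPolynomial.bind₁ P) (f (c : Fin n → R)) =
        ∑ v : Fin n → R,
          MvPolynomial.C (χ (∑ ℓ, (c : Fin n → R) ℓ * v ℓ)) * f v := by
      intro c
      rw [hfdef]
      simp only
      rw [map_prod]
      simp only [bind₁_X_right]
      rw [Finset.prod_congr rfl (fun ℓ _ => hB ((c : Fin n → R) ℓ))]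
      rw [Finset.prod_univ_sum (fun _ => Finset.univ)
        (fun ℓ s => MvPolynomial.C (χ (s * (c : Fin n → R) ℓ)) * X (ι s))]
      rw [Fintype.piFinset_univ]
      refine Finset.sum_congr rfl fun v _ => ?_
      rw [Finset.prod_mul_distrib, ← map_prod, ← AddChar.map_finset_sum]
      congr 2
      exact congrArg χ (Finset.sum_congr rfl fun ℓ _ => mul_comm _ _)
    rw [h1, map_sum, Finset.sum_congr rfl (fun c _ => h2 c), Finset.sum_comm]
    have h3 : ∀ v : Fin n → R,
        (∑ c : C, MvPolynomial.C (χ (∑ ℓ, (c : Fin n → R) ℓ * v ℓ)) * f v)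
        = (if v ∈ dualCode C then MvPolynomial.C (Fintype.card C : ℂ) * f v else 0) := by
      intro v
      rw [← Finset.sum_mul, ← map_sum, orth_sum χ hχ C v]
      split_ifs with h
      · rfl
      · rw [map_zero, zero_mul]
    rw [Finset.sum_congr rfl (fun v _ => h3 v)]
    rw [← Finset.sum_filter]
    rw [Finset.sum_subtype (p := (· ∈ dualCode C)) (Finset.univ.filter (· ∈ dualCode C))
      (by intro x; simp [Finset.mem_filter]) (fun v => MvPolynomial.C (Fintype.card C : ℂ) * f v)]
    rw [← Finset.mul_sum]
    congr 1
    rw [swe, hDuniv]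
    exact Finset.sum_congr rfl fun v _ => (hA (v : Fin n → R)).symm
  have hcard : ((Fintype.card C : ℂ)) ≠ 0 := by
    exact_mod_cast Fintype.card_ne_zero
  rw [← hPdef] at *
  rw [key, Nat.card_eq_fintype_card, ← mul_assoc, ← map_mul,
    inv_mul_cancel₀ hcard, map_one, one_mul]

end
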